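/- Let E ⊂ ℝ^d be measurable, write E_t = E ∩ (H + t e_d) viewed as a subset of H = ℝ^{d-1} via orthogonal projection, and for ξ ∈ W = {ξ ∈ S^{d-1} : |⟨ξ,e_d⟩| ≥ 1/√d} and s ≠ t ∈ [−1,1] set B_ξ^{s,t} = P_ξ(E_s) ∩ P_ξ(E_t) ⊂ H. Then for r ≥ p ≥ 2, ( ∫_W Leb^{d-1}(B_ξ^{s,t})^{r/p} dξ )^{p/r} ≤ C |s−t|^{−(d−1)p/r} (Leb^{d-1}(E_s)·Leb^{d-1}(E_t))^{(p+r)/(2r)}, where C depends only on d, p, r. -/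

import Mathlib

open MeasureTheory Set Metric ENNReal

noncomputable section

abbrev Ed (d : ℕ) := EuclideanSpace ℝ (Fin d)

instance (d : ℕ) : MeasurableSpace (Submodule ℝ (Ed d)) := ⊤

/-- `γ` is the invariant probability measure on the Grassmannian `G(d,k)`. -/
def IsGrassmannianMeasure (d k : ℕ) (γ : Measure (Submodule ℝ (Ed d))) : Prop :=
  IsProbabilityMeasure γ ∧
    (∀ θ : Ed d ≃ₗᵢ[ℝ] Ed d,
      Measure.map (fun L => Submodule.map (θ.toLinearEquiv : Ed d →ₗ[ℝ] Ed d) L) γ = γ) ∧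
    γ {L | Module.finrank ℝ L = k}ᶜ = 0

/-- The `δ`-plate `L_δ(a)`: the `δ`-neighborhood of `(L + a) ∩ B(a, 1/2)`. -/
def plate (d : ℕ) (L : Submodule ℝ (Ed d)) (δ : ℝ) (a : Ed d) : Set (Ed d) :=
  Metric.thickening δ ({x | x - a ∈ L} ∩ Metric.closedBall a (1 / 2))

/-- The plate-average maximal operator `M^k_δ`. -/
def maxOp (d : ℕ) (δ : ℝ) (f : Ed d → ℝ≥0∞) (L : Submodule ℝ (Ed d)) : ℝ≥0∞ :=
  ⨆ a : Ed d, (volume (plate d L δ a))⁻¹ * ∫⁻ x in plate d L δ a, f x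

open Module RealInnerProductSpace

namespace Stmt10Aux

variable {G : Type*} [NormedAddCommGroup G] [InnerProductSpace ℝ G]
  [FiniteDimensional ℝ G] [MeasurableSpace G] [BorelSpace G]

lemma vol_shift_left (A B : Set G) (a : G) :
    volume {w : G | w + a ∈ A ∧ w ∈ B} ≤ volume A := by
  calc volume {w : G | w + a ∈ A ∧ w ∈ B} ≤ volume ((· + a) ⁻¹' A) :=
        measure_mono fun w hw => hw.1
    _ = volume A := measure_preimage_add_right _ _ _

lemma vol_shift_right (A B : Set G) (a : G) :
    volume {w : G | w + a ∈ A ∧ w ∈ B} ≤ volume B :=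
  measure_mono fun w hw => hw.2

lemma volShift_eq {A B : Set G} (hA : MeasurableSet A) (hB : MeasurableSet B) (a : G) :
    volume {w : G | w + a ∈ A ∧ w ∈ B}
      = ∫⁻ w, A.indicator 1 (w + a) * B.indicator 1 w := by
  have hset : {w : G | w + a ∈ A ∧ w ∈ B} = (· + a) ⁻¹' A ∩ B := rfl
  rw [hset, ← lintegral_indicator_one ((hA.preimage (measurable_add_const a)).inter hB)]
  congr 1
  ext w
  by_cases h1 : w + a ∈ A <;> by_cases h2 : w ∈ B <;>
    simp [Set.indicator, h1, h2]

lemma meas_volShift {A B : Set G} (hA : MeasurableSet A) (hB : MeasurableSet B) :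
    Measurable fun a : G => volume {w : G | w + a ∈ A ∧ w ∈ B} := by
  simp only [volShift_eq hA hB]
  exact Measurable.lintegral_prod_right'
    (f := fun q : G × G => A.indicator 1 (q.2 + q.1) * B.indicator 1 q.2)
    (((measurable_one.indicator hA).comp (measurable_snd.add measurable_fst)).mul
      ((measurable_one.indicator hB).comp measurable_snd))

lemma lintegral_volShift {A B : Set G} (hA : MeasurableSet A) (hB : MeasurableSet B) :
    ∫⁻ a, volume {w : G | w + a ∈ A ∧ w ∈ B} = volume A * volume B := by
  simp only [volShift_eq hA hB]
  rw [lintegral_lintegral_swap]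
  · have key : ∀ w : G, (∫⁻ a, A.indicator 1 (w + a) * B.indicator 1 w)
        = B.indicator 1 w * volume A := by
      intro w
      have hma : AEMeasurable (fun a : G => A.indicator (1 : G → ℝ≥0∞) (w + a)) volume :=
        (((measurable_one.indicator hA).comp (measurable_const_add w))).aemeasurable
      rw [lintegral_mul_const'' (B.indicator 1 w) hma, mul_comm]
      congr 1
      have : (fun a : G => A.indicator (1 : G → ℝ≥0∞) (w + a)) = ((w + ·) ⁻¹' A).indicator 1 := by
        funext a
        by_cases h : w + a ∈ A <;> simp [Set.indicator, h]
      rw [this, lintegral_indicator_one (hA.preimage (measurable_const_add w)),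
        measure_preimage_add]
    simp only [key]
    rw [lintegral_mul_const'' (volume A) (measurable_one.indicator hB).aemeasurable, lintegral_indicator_one hB,
      mul_comm]
  · exact (((measurable_one.indicator hA).comp (measurable_snd.add measurable_fst)).mul
      ((measurable_one.indicator hB).comp measurable_snd)).aemeasurable


def unitSph {n : ℕ} (x : Ed (n+1)) (hx : x ≠ 0) : Metric.sphere (0 : Ed (n+1)) 1 :=
  ⟨‖x‖⁻¹ • x, by
    simp [mem_sphere_zero_iff_norm, norm_smul, inv_mul_cancel₀ (norm_ne_zero_iff.mpr hx)]⟩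

lemma sphere_lintegral {n : ℕ} (F : Metric.sphere (0 : Ed (n+1)) 1 → ℝ≥0∞) (hF : Measurable F)
    (G : Ed (n+1) → ℝ≥0∞) (hG : Measurable G)
    (hFG : ∀ (x : Ed (n+1)) (hx : x ≠ 0), G x = F (unitSph x hx)) :
    ∫⁻ ξ, F ξ ∂(volume : Measure (Ed (n+1))).toSphere
      = ((n:ℝ≥0∞)+1) * ∫⁻ x in Metric.ball (0 : Ed (n+1)) 1 \ {0}, G x ∂volume := by
  have hdim : finrank ℝ (Ed (n+1)) = n + 1 := finrank_euclideanSpace_fin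
  have hMP := Measure.measurePreserving_homeomorphUnitSphereProd (volume : Measure (Ed (n+1)))
  set σ := (volume : Measure (Ed (n+1))).toSphere
  set ν := Measure.volumeIoiPow (finrank ℝ (Ed (n+1)) - 1)
  have hΦ : Measurable fun q : Metric.sphere (0 : Ed (n+1)) 1 × Set.Ioi (0:ℝ) =>
      F q.1 * (Set.Iio (⟨1, Set.mem_Ioi.mpr one_pos⟩ : Set.Ioi (0:ℝ))).indicator 1 q.2 :=
    ((hF.comp measurable_fst).mul
      ((measurable_one.indicator measurableSet_Iio).comp measurable_snd))
  have key := hMP.lintegral_comp hΦ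
  rw [lintegral_prod_mul (hF.aemeasurable) ((measurable_one.indicator measurableSet_Iio).aemeasurable)] at key
  rw [lintegral_indicator_one measurableSet_Iio] at key
  have hν1 : ν (Set.Iio (⟨1, Set.mem_Ioi.mpr one_pos⟩ : Set.Ioi (0:ℝ))) = ENNReal.ofReal (1 / (n+1)) := by
    rw [show ν = Measure.volumeIoiPow n by unfold ν; rw [hdim]; norm_num,
      Measure.volumeIoiPow_apply_Iio]
    norm_num
  have hint : ∀ a : ({(0:Ed (n+1))}ᶜ : Set (Ed (n+1))),
      F ((homeomorphUnitSphereProd (Ed (n+1))) a).1 *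
        (Set.Iio (⟨1, Set.mem_Ioi.mpr one_pos⟩ : Set.Ioi (0:ℝ))).indicator 1
          ((homeomorphUnitSphereProd (Ed (n+1))) a).2
      = ((Metric.ball (0:Ed (n+1)) 1 \ {0}).indicator G) (a : Ed (n+1)) := by
    intro a
    have ha : (a : Ed (n+1)) ≠ 0 := a.2
    by_cases hb : ‖(a : Ed (n+1))‖ < 1
    · have hmem : (a : Ed (n+1)) ∈ Metric.ball (0:Ed (n+1)) 1 \ {0} := by
        simp [Metric.mem_ball, dist_zero_right, hb, ha]
      rw [Set.indicator_of_mem hmem, hFG _ ha]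
      have h2 : ((homeomorphUnitSphereProd (Ed (n+1))) a).2 ∈
          Set.Iio (⟨1, Set.mem_Ioi.mpr one_pos⟩ : Set.Ioi (0:ℝ)) := by
        simp only [Set.mem_Iio, ← Subtype.coe_lt_coe, homeomorphUnitSphereProd_apply_snd_coe]
        exact hb
      rw [Set.indicator_of_mem h2]
      simp only [Pi.one_apply, mul_one]
      congr 1
      exact Subtype.ext (by simp [unitSph, homeomorphUnitSphereProd_apply_fst_coe])
    · have hmem : (a : Ed (n+1)) ∉ Metric.ball (0:Ed (n+1)) 1 \ {0} := by
        simp [Metric.mem_ball, dist_zero_right, hb]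
      rw [Set.indicator_of_notMem hmem]
      have h2 : ((homeomorphUnitSphereProd (Ed (n+1))) a).2 ∉
          Set.Iio (⟨1, Set.mem_Ioi.mpr one_pos⟩ : Set.Ioi (0:ℝ)) := by
        simp only [Set.mem_Iio, ← Subtype.coe_lt_coe, homeomorphUnitSphereProd_apply_snd_coe]
        exact hb
      rw [Set.indicator_of_notMem h2, mul_zero]
  simp only [hint] at key
  rw [lintegral_subtype_comap (measurableSet_singleton (0:Ed (n+1))).compl] at key
  have hmeasd : MeasurableSet (Metric.ball (0:Ed (n+1)) 1 \ {0}) :=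
    measurableSet_ball.diff (measurableSet_singleton _)
  rw [lintegral_indicator hmeasd, Measure.restrict_restrict hmeasd,
    Set.inter_eq_left.mpr (fun x hx => hx.2)] at key
  rw [hν1] at key
  have hc : ENNReal.ofReal (1/(n+1):ℝ) = ((n:ℝ≥0∞)+1)⁻¹ := by
    rw [one_div, ENNReal.ofReal_inv_of_pos (by positivity)]
    congr 1
    rw [show ((n:ℝ)+1) = ((n+1:ℕ):ℝ) by push_cast; ring, ENNReal.ofReal_natCast]
    push_cast; ring
  rw [hc] at key
  have hn0 : ((n:ℝ≥0∞)+1) ≠ 0 := by simp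
  have hnt : ((n:ℝ≥0∞)+1) ≠ ⊤ := by simp [ENNReal.add_ne_top]
  calc ∫⁻ ξ, F ξ ∂σ = ((n:ℝ≥0∞)+1) * ((∫⁻ ξ, F ξ ∂σ) * ((n:ℝ≥0∞)+1)⁻¹) := by
        rw [mul_comm _ (((n:ℝ≥0∞)+1)⁻¹), ← mul_assoc, ENNReal.mul_inv_cancel hn0 hnt, one_mul]
    _ = ((n:ℝ≥0∞)+1) * ∫⁻ x in Metric.ball (0 : Ed (n+1)) 1 \ {0}, G x ∂volume := by rw [key]


lemma exists_adapted {n : ℕ} (u : Ed (n+1)) (hu : ‖u‖ = 1)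
    (hfr : finrank ℝ ((ℝ ∙ u)ᗮ : Submodule ℝ (Ed (n+1))) = n) :
    ∃ (b0 : OrthonormalBasis (Fin n) ℝ ((ℝ ∙ u)ᗮ : Submodule ℝ (Ed (n+1))))
      (B : OrthonormalBasis (Fin (n+1)) ℝ (Ed (n+1))),
      (∀ i : Fin n, B i.castSucc = (b0 i : Ed (n+1))) ∧ B (Fin.last n) = u := by
  have hu0 : u ≠ 0 := by intro h; rw [h, norm_zero] at hu; norm_num at hu
  let b0 : OrthonormalBasis (Fin n) ℝ ((ℝ ∙ u)ᗮ : Submodule ℝ (Ed (n+1))) :=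
    (stdOrthonormalBasis ℝ _).reindex (finCongr hfr)
  let f : Fin (n+1) → Ed (n+1) := Fin.snoc (fun i => (b0 i : Ed (n+1))) u
  have hinner0 : ∀ i : Fin n, ⟪(b0 i : Ed (n+1)), u⟫ = 0 := by
    intro i
    have := (b0 i).2
    rw [Submodule.mem_orthogonal] at this
    exact real_inner_comm u _ ▸ this u (Submodule.mem_span_singleton_self u)
  have hON : Orthonormal ℝ f := by
    rw [orthonormal_iff_ite]
    intro i j
    refine Fin.lastCases ?_ (fun i' => ?_) i <;> [skip; skip] <;>
      refine Fin.lastCases ?_ (fun j' => ?_) j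
    · have h1 : ⟪u, u⟫ = 1 := by rw [real_inner_self_eq_norm_mul_norm, hu]; norm_num
      simp only [f, Fin.snoc_last]
      rw [if_pos trivial]
      exact h1
    · simp only [f, Fin.snoc_last, Fin.snoc_castSucc]
      rw [real_inner_comm, hinner0 j']
      simp [(Fin.castSucc_lt_last j').ne']
    · simp only [f, Fin.snoc_last, Fin.snoc_castSucc]
      rw [hinner0 i']
      simp [(Fin.castSucc_lt_last i').ne]
    · simp only [f, Fin.snoc_castSucc]
      have := b0.orthonormal
      rw [orthonormal_iff_ite] at this
      rw [← Submodule.coe_inner, this i' j']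
      simp [Fin.castSucc_inj]
  have hcard : Fintype.card (Fin (n+1)) = finrank ℝ (Ed (n+1)) := by
    simp [finrank_euclideanSpace_fin]
  have hspan : ⊤ ≤ Submodule.span ℝ (Set.range f) := by
    rw [← (basisOfOrthonormalOfCardEqFinrank hON hcard).span_eq,
      coe_basisOfOrthonormalOfCardEqFinrank]
  exact ⟨b0, OrthonormalBasis.mk hON hspan, fun i => by
    simp [OrthonormalBasis.coe_mk, f, Fin.snoc_castSucc], by
    simp [OrthonormalBasis.coe_mk, f, Fin.snoc_last]⟩

end Stmt10Aux
open scoped ENNReal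




set_option maxHeartbeats 2000000 in
open RealInnerProductSpace in
/-- the key convolution/slicing estimate for the projected slices
`B_ξ^{s,t} = P_ξ(E_s) ∩ P_ξ(E_t)`. -/
theorem stmt_10 (d : ℕ) (hd : 2 ≤ d) (p r : ℝ) (hp : 2 ≤ p) (hpr : p ≤ r) :
    ∃ C > (0:ℝ), ∀ (u : Ed d), ‖u‖ = 1 →
      ∀ E : Set (Ed d), MeasurableSet E →
      ∀ s t : ℝ, s ∈ Icc (-1:ℝ) 1 → t ∈ Icc (-1:ℝ) 1 → s ≠ t →
      (∫⁻ ξ in {ξ : sphere (0 : Ed d) 1 | (1:ℝ) / Real.sqrt d ≤ |⟪(ξ : Ed d), u⟫|},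
          (volume {z : ((ℝ ∙ u)ᗮ : Submodule ℝ (Ed d)) |
            (∃ x : ((ℝ ∙ u)ᗮ : Submodule ℝ (Ed d)), (x : Ed d) + s • u ∈ E ∧
              ((x : Ed d) + s • u) - (⟪(x : Ed d) + s • u, u⟫ / ⟪(ξ : Ed d), u⟫) • (ξ : Ed d)
                = (z : Ed d)) ∧
            (∃ x : ((ℝ ∙ u)ᗮ : Submodule ℝ (Ed d)), (x : Ed d) + t • u ∈ E ∧
              ((x : Ed d) + t • u) - (⟪(x : Ed d) + t • u, u⟫ / ⟪(ξ : Ed d), u⟫) • (ξ : Ed d)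
                = (z : Ed d))}) ^ (r / p)
          ∂(volume : Measure (Ed d)).toSphere) ^ (p / r)
        ≤ ENNReal.ofReal (C * |s - t| ^ (-((d:ℝ) - 1) * p / r)) *
          (volume {x : ((ℝ ∙ u)ᗮ : Submodule ℝ (Ed d)) | (x : Ed d) + s • u ∈ E} *
            volume {x : ((ℝ ∙ u)ᗮ : Submodule ℝ (Ed d)) | (x : Ed d) + t • u ∈ E})
            ^ ((p + r) / (2 * r)) := by
  obtain ⟨m, rfl⟩ : ∃ m, d = m + 1 := ⟨d - 1, by omega⟩
  have hp0 : (0:ℝ) < p := by linarith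
  have hr0 : (0:ℝ) < r := by linarith
  have hq1 : (1:ℝ) ≤ r / p := (one_le_div hp0).mpr hpr
  have he0 : (0:ℝ) < p / r := div_pos hp0 hr0
  have he1 : p / r ≤ 1 := (div_le_one hr0).mpr hpr
  refine ⟨((2 * (m + 1) : ℕ) : ℝ), by positivity, ?_⟩
  intro u hu E hE s t hs ht hst
  classical
  set C : ℝ := ((2 * (m + 1) : ℕ) : ℝ) with hCdef
  have hu0 : u ≠ 0 := by intro h; rw [h, norm_zero] at hu; norm_num at hu
  set H : Submodule ℝ (Ed (m+1)) := (ℝ ∙ u)ᗮ with hHdef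
  have hfr : Module.finrank ℝ H = m := by
    have h1 : Module.finrank ℝ (ℝ ∙ u) = 1 := finrank_span_singleton hu0
    have h2 := Submodule.finrank_add_finrank_orthogonal (K := (ℝ ∙ u : Submodule ℝ (Ed (m+1))))
    rw [h1, finrank_euclideanSpace_fin] at h2
    rw [hHdef]
    omega
  have hst' : (0:ℝ) < |s - t| := abs_pos.mpr (sub_ne_zero.mpr hst)
  have hts' : (0:ℝ) < |t - s| := abs_pos.mpr (sub_ne_zero.mpr (Ne.symm hst))
  set A : Set H := {x : H | (x : Ed (m+1)) + s • u ∈ E} with hAdef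
  set B : Set H := {x : H | (x : Ed (m+1)) + t • u ∈ E} with hBdef
  have hA : MeasurableSet A := hE.preimage (by fun_prop)
  have hB : MeasurableSet B := hE.preimage (by fun_prop)
  set g : H → ℝ≥0∞ := fun a => volume {w : H | w + a ∈ A ∧ w ∈ B} with hgdef
  set I : ℝ≥0∞ := volume A * volume B with hIdef
  have hgm : Measurable g := Stmt10Aux.meas_volShift hA hB
  have hgint : ∫⁻ a, g a = I := Stmt10Aux.lintegral_volShift hA hB
  have hgleA : ∀ a, g a ≤ volume A := fun a => Stmt10Aux.vol_shift_left A B a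
  have hgleB : ∀ a, g a ≤ volume B := fun a => Stmt10Aux.vol_shift_right A B a
  set W : Set (sphere (0 : Ed (m+1)) 1) :=
    {ξ : sphere (0 : Ed (m+1)) 1 | (1:ℝ) / Real.sqrt ((m+1 : ℕ)) ≤ |⟪(ξ : Ed (m+1)), u⟫|} with hWdef
  have hsqd : (0:ℝ) < 1 / Real.sqrt ((m+1 : ℕ)) := by positivity
  have hWm : MeasurableSet W := by
    have hcont : Continuous fun ξ : sphere (0 : Ed (m+1)) 1 => |⟪(ξ : Ed (m+1)), u⟫| :=
      (continuous_subtype_val.inner continuous_const).abs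
    exact measurableSet_le measurable_const hcont.measurable
  set vm : sphere (0 : Ed (m+1)) 1 → H := fun ξ =>
    Submodule.orthogonalProjection H (u - ⟪(ξ : Ed (m+1)), u⟫⁻¹ • (ξ : Ed (m+1))) with hvmdef
  have hvm : Measurable vm := by
    apply (Submodule.orthogonalProjection H).continuous.measurable.comp
    exact (measurable_const.sub
      (((continuous_subtype_val.inner continuous_const :
          Continuous fun ξ : sphere (0 : Ed (m+1)) 1 => ⟪(ξ : Ed (m+1)), u⟫).measurable.inv).smul
        continuous_subtype_val.measurable))
  -- the cone condition forces nonzero inner product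
  have hWne : ∀ ξ ∈ W, ⟪(ξ : Ed (m+1)), u⟫ ≠ 0 := by
    intro ξ hξ h0
    rw [hWdef] at hξ
    simp only [Set.mem_setOf_eq, h0, abs_zero] at hξ
    linarith
  -- coe of vm
  have hvmcoe : ∀ ξ ∈ W, ((vm ξ : H) : Ed (m+1)) = u - ⟪(ξ : Ed (m+1)), u⟫⁻¹ • (ξ : Ed (m+1)) := by
    intro ξ hξ
    have hc := hWne ξ hξ
    have hmem : u - ⟪(ξ : Ed (m+1)), u⟫⁻¹ • (ξ : Ed (m+1)) ∈ H := by
      rw [hHdef, Submodule.mem_orthogonal_singleton_iff_inner_right]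
      have hcomm : ⟪u, (ξ : Ed (m+1))⟫ = ⟪(ξ : Ed (m+1)), u⟫ := real_inner_comm _ _
      rw [inner_sub_right, real_inner_smul_right, real_inner_self_eq_norm_mul_norm, hu, hcomm,
        inv_mul_cancel₀ hc]
      ring
    have hfix := Submodule.orthogonalProjection_mem_subspace_eq_self
      (K := H) ⟨u - ⟪(ξ : Ed (m+1)), u⟫⁻¹ • (ξ : Ed (m+1)), hmem⟩
    calc ((vm ξ : H) : Ed (m+1))
        = ((Submodule.orthogonalProjection H (u - ⟪(ξ : Ed (m+1)), u⟫⁻¹ • (ξ : Ed (m+1))) : H) : Ed (m+1)) :=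
          rfl
      _ = ((⟨u - ⟪(ξ : Ed (m+1)), u⟫⁻¹ • (ξ : Ed (m+1)), hmem⟩ : H) : Ed (m+1)) := by rw [hfix]
      _ = u - ⟪(ξ : Ed (m+1)), u⟫⁻¹ • (ξ : Ed (m+1)) := rfl
  -- the slice identity
  have hslice : ∀ ξ ∈ W,
      (volume {z : H |
        (∃ x : H, (x : Ed (m+1)) + s • u ∈ E ∧
          ((x : Ed (m+1)) + s • u) - (⟪(x : Ed (m+1)) + s • u, u⟫ / ⟪(ξ : Ed (m+1)), u⟫)
            • (ξ : Ed (m+1)) = (z : Ed (m+1))) ∧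
        (∃ x : H, (x : Ed (m+1)) + t • u ∈ E ∧
          ((x : Ed (m+1)) + t • u) - (⟪(x : Ed (m+1)) + t • u, u⟫ / ⟪(ξ : Ed (m+1)), u⟫)
            • (ξ : Ed (m+1)) = (z : Ed (m+1)))})
      = g ((t - s) • vm ξ) := by
    intro ξ hξ
    have hc := hWne ξ hξ
    set v : H := vm ξ with hvdef
    have hvcoe : (v : Ed (m+1)) = u - ⟪(ξ : Ed (m+1)), u⟫⁻¹ • (ξ : Ed (m+1)) := hvmcoe ξ hξ
    have hinner_u : ∀ x : H, ⟪(x : Ed (m+1)), u⟫ = 0 := by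
      intro x
      have hx : (x : Ed (m+1)) ∈ (Submodule.span ℝ {u})ᗮ := x.2
      rw [Submodule.mem_orthogonal] at hx
      have := hx u (Submodule.mem_span_singleton_self u)
      rwa [real_inner_comm] at this
    have hips : ∀ (a : ℝ) (x : H), ⟪(x : Ed (m+1)) + a • u, u⟫ = a := by
      intro a x
      rw [inner_add_left, hinner_u, real_inner_smul_left, real_inner_self_eq_norm_mul_norm, hu]
      ring
    have hkey : ∀ (a : ℝ) (x z : H),
        (((x : Ed (m+1)) + a • u) - (⟪(x : Ed (m+1)) + a • u, u⟫ / ⟪(ξ : Ed (m+1)), u⟫)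
            • (ξ : Ed (m+1)) = (z : Ed (m+1)))
        ↔ (x : Ed (m+1)) + a • (v : Ed (m+1)) = (z : Ed (m+1)) := by
      intro a x z
      rw [hips a x, div_eq_mul_inv]
      constructor <;> intro h <;> rw [← h] <;> rw [hvcoe] <;> module
    have hpre : (fun w : H => w + t • v) ⁻¹' {z : H |
        (∃ x : H, (x : Ed (m+1)) + s • u ∈ E ∧
          ((x : Ed (m+1)) + s • u) - (⟪(x : Ed (m+1)) + s • u, u⟫ / ⟪(ξ : Ed (m+1)), u⟫)
            • (ξ : Ed (m+1)) = (z : Ed (m+1))) ∧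
        (∃ x : H, (x : Ed (m+1)) + t • u ∈ E ∧
          ((x : Ed (m+1)) + t • u) - (⟪(x : Ed (m+1)) + t • u, u⟫ / ⟪(ξ : Ed (m+1)), u⟫)
            • (ξ : Ed (m+1)) = (z : Ed (m+1)))}
        = {w : H | w + (t - s) • v ∈ A ∧ w ∈ B} := by
      ext w
      simp only [Set.mem_preimage, Set.mem_setOf_eq, hkey]
      constructor
      · rintro ⟨⟨x1, hx1E, hx1⟩, ⟨x2, hx2E, hx2⟩⟩
        have e1 : x1 = w + (t - s) • v := by
          apply Subtype.ext
          have : (x1 : Ed (m+1)) = ((w + t • v : H) : Ed (m+1)) - s • (v : Ed (m+1)) := by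
            rw [← hx1]; abel
          rw [this]
          push_cast
          module
        have e2 : x2 = w := by
          apply Subtype.ext
          have : (x2 : Ed (m+1)) = ((w + t • v : H) : Ed (m+1)) - t • (v : Ed (m+1)) := by
            rw [← hx2]; abel
          rw [this]
          push_cast
          module
        subst e1; subst e2
        exact ⟨hx1E, hx2E⟩
      · rintro ⟨h1, h2⟩
        refine ⟨⟨w + (t - s) • v, h1, ?_⟩, ⟨w, h2, ?_⟩⟩
        · push_cast; module
        · push_cast; module
    calc volume {z : H |
        (∃ x : H, (x : Ed (m+1)) + s • u ∈ E ∧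
          ((x : Ed (m+1)) + s • u) - (⟪(x : Ed (m+1)) + s • u, u⟫ / ⟪(ξ : Ed (m+1)), u⟫)
            • (ξ : Ed (m+1)) = (z : Ed (m+1))) ∧
        (∃ x : H, (x : Ed (m+1)) + t • u ∈ E ∧
          ((x : Ed (m+1)) + t • u) - (⟪(x : Ed (m+1)) + t • u, u⟫ / ⟪(ξ : Ed (m+1)), u⟫)
            • (ξ : Ed (m+1)) = (z : Ed (m+1)))}
        = volume ((fun w : H => w + t • v) ⁻¹' _) := (measure_preimage_add_right volume (t • v) _).symm
      _ = volume {w : H | w + (t - s) • v ∈ A ∧ w ∈ B} := by rw [hpre]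
      _ = g ((t - s) • v) := rfl

  -- rewrite the goal integrand
  have hrw : ∫⁻ ξ in W, (volume {z : H |
        (∃ x : H, (x : Ed (m+1)) + s • u ∈ E ∧
          ((x : Ed (m+1)) + s • u) - (⟪(x : Ed (m+1)) + s • u, u⟫ / ⟪(ξ : Ed (m+1)), u⟫)
            • (ξ : Ed (m+1)) = (z : Ed (m+1))) ∧
        (∃ x : H, (x : Ed (m+1)) + t • u ∈ E ∧
          ((x : Ed (m+1)) + t • u) - (⟪(x : Ed (m+1)) + t • u, u⟫ / ⟪(ξ : Ed (m+1)), u⟫)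
            • (ξ : Ed (m+1)) = (z : Ed (m+1)))}) ^ (r/p)
        ∂(volume : Measure (Ed (m+1))).toSphere
      = ∫⁻ ξ in W, (g ((t - s) • vm ξ)) ^ (r/p) ∂(volume : Measure (Ed (m+1))).toSphere :=
    setLIntegral_congr_fun hWm (fun ξ hξ => by rw [hslice ξ hξ])
  rw [hrw]
  by_cases hI0 : I = 0
  · have hg0 : ∀ a, g a = 0 := by
      intro a
      rcases mul_eq_zero.mp hI0 with h | h
      · exact le_antisymm ((hgleA a).trans h.le) zero_le
      · exact le_antisymm ((hgleB a).trans h.le) zero_le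
    have hint0 : ∫⁻ ξ in W, (g ((t - s) • vm ξ)) ^ (r/p)
        ∂(volume : Measure (Ed (m+1))).toSphere = 0 := by
      have hz : ∀ ξ : sphere (0 : Ed (m+1)) 1, (g ((t - s) • vm ξ)) ^ (r/p) = 0 := fun ξ => by
        rw [hg0, ENNReal.zero_rpow_of_pos (by positivity)]
      simp only [hz, lintegral_const, zero_mul]
    rw [hint0, ENNReal.zero_rpow_of_pos he0]
    exact zero_le
  have hCpos : (0:ℝ) < C := by rw [hCdef]; positivity
  by_cases hItop : I = ⊤
  · refine le_top.trans_eq ?_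
    rw [hItop, ENNReal.top_rpow_of_pos (by positivity), ENNReal.mul_top]
    intro h
    rw [ENNReal.ofReal_eq_zero] at h
    have hpos : (0:ℝ) < C * |s - t| ^ (-((((m+1:ℕ)):ℝ) - 1) * p / r) :=
      mul_pos hCpos (Real.rpow_pos_of_pos hst' _)
    linarith
  -- main case
  set M : ℝ≥0∞ := I ^ ((1:ℝ)/2) with hMdef
  have hMtop : M ≠ ⊤ := ENNReal.rpow_ne_top_of_nonneg (by norm_num) hItop
  have hgleM : ∀ a, g a ≤ M := by
    intro a
    have h2 : g a * g a ≤ I := mul_le_mul' (hgleA a) (hgleB a)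
    calc g a = (g a) ^ ((((2:ℕ)):ℝ) * ((1:ℝ)/2)) := by
          rw [show (((2:ℕ)):ℝ) * ((1:ℝ)/2) = 1 by norm_num, ENNReal.rpow_one]
      _ = ((g a) ^ (((2:ℕ)):ℝ)) ^ ((1:ℝ)/2) := ENNReal.rpow_mul _ _ _
      _ = ((g a) * (g a)) ^ ((1:ℝ)/2) := by rw [ENNReal.rpow_natCast, pow_two]
      _ ≤ M := ENNReal.rpow_le_rpow h2 (by norm_num)
  have hgtop : ∀ a, g a ≠ ⊤ := fun a => ((hgleM a).trans_lt hMtop.lt_top).ne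
  have hpow : ∀ a : H, (g a) ^ (r/p) ≤ M ^ (r/p - 1) * g a := by
    intro a
    rcases eq_or_ne (g a) 0 with h0 | h0
    · rw [h0, ENNReal.zero_rpow_of_pos (by positivity), mul_zero]
    · calc (g a) ^ (r/p) = (g a) ^ ((r/p - 1) + 1) := by norm_num
        _ = (g a) ^ (r/p - 1) * (g a) ^ (1:ℝ) := ENNReal.rpow_add _ _ h0 (hgtop a)
        _ ≤ M ^ (r/p - 1) * g a := by
            rw [ENNReal.rpow_one]
            exact mul_le_mul_left (ENNReal.rpow_le_rpow (hgleM a) (by linarith)) _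
  have hsphere_bound : ∫⁻ ξ in W, g ((t - s) • vm ξ) ∂(volume : Measure (Ed (m+1))).toSphere
      ≤ ((m+1 : ℕ) : ℝ≥0∞) * (ENNReal.ofReal ((|s - t|^m)⁻¹) * I * ENNReal.ofReal 2) := by
    have hmeasg' : Measurable fun ξ : sphere (0 : Ed (m+1)) 1 => g ((t - s) • vm ξ) :=
      hgm.comp (hvm.const_smul (t - s))
    set F : sphere (0 : Ed (m+1)) 1 → ℝ≥0∞ :=
      W.indicator (fun ξ => g ((t - s) • vm ξ)) with hFdef
    have hF : Measurable F := hmeasg'.indicator hWm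
    set G : Ed (m+1) → ℝ≥0∞ := fun x =>
      if (1:ℝ) / Real.sqrt ((m+1 : ℕ)) ≤ ‖x‖⁻¹ * |⟪x, u⟫| then
        g ((t - s) • (Submodule.orthogonalProjection H (u - ⟪x, u⟫⁻¹ • x))) else 0 with hGdef
    have hG : Measurable G := by
      apply Measurable.ite
      · exact measurableSet_le measurable_const
          ((measurable_norm.inv).mul
            ((continuous_id.inner continuous_const).measurable.abs))
      · have hsub : Measurable fun x : Ed (m+1) => u - (⟪x, u⟫)⁻¹ • x :=
          measurable_const.sub
            (((continuous_id.inner continuous_const :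
              Continuous fun x : Ed (m+1) => ⟪x, u⟫).measurable.inv).smul measurable_id)
        exact hgm.comp
          (((Submodule.orthogonalProjection H).continuous.measurable.comp hsub).const_smul (t - s))
      · exact measurable_const
    have hFG : ∀ (x : Ed (m+1)) (hx : x ≠ 0), G x = F (Stmt10Aux.unitSph x hx) := by
      intro x hx
      have hn0 : ‖x‖ ≠ 0 := norm_ne_zero_iff.mpr hx
      have hucoe : ((Stmt10Aux.unitSph x hx : sphere (0 : Ed (m+1)) 1) : Ed (m+1))
          = ‖x‖⁻¹ • x := rfl
      have hin : ⟪((Stmt10Aux.unitSph x hx : sphere (0 : Ed (m+1)) 1) : Ed (m+1)), u⟫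
          = ‖x‖⁻¹ * ⟪x, u⟫ := by rw [hucoe, real_inner_smul_left]
      have habs : |⟪((Stmt10Aux.unitSph x hx : sphere (0 : Ed (m+1)) 1) : Ed (m+1)), u⟫|
          = ‖x‖⁻¹ * |⟪x, u⟫| := by
        rw [hin, abs_mul, abs_of_nonneg (inv_nonneg.mpr (norm_nonneg x))]
      by_cases hcond : (1:ℝ) / Real.sqrt ((m+1 : ℕ)) ≤ ‖x‖⁻¹ * |⟪x, u⟫|
      · have hmem : Stmt10Aux.unitSph x hx ∈ W := by
          rw [hWdef]
          simp only [Set.mem_setOf_eq, habs]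
          exact hcond
        rw [hFdef]
        rw [Set.indicator_of_mem hmem, hGdef]
        simp only [if_pos hcond]
        congr 2
        rw [hvmdef]
        simp only
        congr 2
        rw [hin, hucoe, smul_smul]
        congr 1
        rw [mul_inv, inv_inv, mul_comm ‖x‖ _, mul_assoc, mul_inv_cancel₀ hn0, mul_one]
      · have hmem : Stmt10Aux.unitSph x hx ∉ W := by
          rw [hWdef]
          simp only [Set.mem_setOf_eq, habs]
          exact hcond
        rw [hFdef, Set.indicator_of_notMem hmem, hGdef]
        simp only [if_neg hcond]
    have hstart : ∫⁻ ξ in W, g ((t - s) • vm ξ) ∂(volume : Measure (Ed (m+1))).toSphere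
        = ∫⁻ ξ, F ξ ∂(volume : Measure (Ed (m+1))).toSphere := (lintegral_indicator hWm _).symm
    have hsph := Stmt10Aux.sphere_lintegral F hF G hG hFG
    rw [hstart, hsph]
    have hcast : ((m : ℝ≥0∞) + 1) = ((m+1 : ℕ) : ℝ≥0∞) := by push_cast; ring
    rw [hcast]
    apply mul_le_mul_right
    -- now the product estimate
    obtain ⟨b0, Bb, hBb0, hBblast⟩ := Stmt10Aux.exists_adapted u hu hfr
    set ψ : Ed (m+1) → ℝ≥0∞ := (ball (0 : Ed (m+1)) 1 \ {0}).indicator G with hψdef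
    have hmeasball : MeasurableSet (ball (0 : Ed (m+1)) 1 \ {0}) :=
      measurableSet_ball.diff (measurableSet_singleton _)
    have hψmeas : Measurable ψ := hG.indicator hmeasball
    set ν : Measure (Fin m → ℝ) := Measure.pi fun _ : Fin m => (volume : Measure ℝ) with hνdef
    set Ψ : Ed (m+1) → ℝ × (Fin m → ℝ) := fun x =>
      (MeasurableEquiv.piFinSuccAbove (fun _ : Fin (m+1) => ℝ) (Fin.last m))
        (((MeasurableEquiv.toLp 2 (Fin (m+1) → ℝ)).symm) (Bb.repr x)) with hΨdef
    have hΨmp : MeasurePreserving Ψ volume ((volume : Measure ℝ).prod ν) :=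
      (measurePreserving_piFinSuccAbove (fun _ : Fin (m+1) => (volume : Measure ℝ))
        (Fin.last m)).comp
        ((EuclideanSpace.volume_preserving_symm_measurableEquiv_toLp (Fin (m+1))).comp
          Bb.measurePreserving_repr)
    set Φ : ℝ × (Fin m → ℝ) → Ed (m+1) := fun z =>
      Bb.repr.symm (((MeasurableEquiv.toLp 2 (Fin (m+1) → ℝ)).symm).symm
        ((MeasurableEquiv.piFinSuccAbove (fun _ : Fin (m+1) => ℝ) (Fin.last m)).symm z))
      with hΦdef
    have hΦΨ : ∀ x, Φ (Ψ x) = x := by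
      intro x
      rw [hΦdef, hΨdef]
      simp only [MeasurableEquiv.symm_apply_apply, LinearIsometryEquiv.symm_apply_apply]
    have hΦmeas : Measurable Φ :=
      (Bb.repr.symm.continuous.measurable).comp
        ((MeasurableEquiv.measurable _).comp (MeasurableEquiv.measurable _))
    have hreprΦ : ∀ z : ℝ × (Fin m → ℝ),
        Bb.repr (Φ z) = ((MeasurableEquiv.toLp 2 (Fin (m+1) → ℝ)).symm).symm
          ((Fin.last m).insertNth z.1 z.2) := by
      intro z
      rw [hΦdef]
      simp only [LinearIsometryEquiv.apply_symm_apply]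
      congr 1
    set Y : (Fin m → ℝ) → H := fun ω =>
      b0.repr.symm (((MeasurableEquiv.toLp 2 (Fin m → ℝ)).symm).symm ω) with hYdef
    have hinneru : ∀ y : H, ⟪u, (y : Ed (m+1))⟫ = 0 := fun y =>
      Submodule.mem_orthogonal_singleton_iff_inner_right.mp y.2
    have hdecomp : ∀ (τ : ℝ) (ω : Fin m → ℝ), Φ (τ, ω) = (Y ω : Ed (m+1)) + τ • u := by
      intro τ ω
      apply Bb.repr.injective
      rw [hreprΦ]
      ext i
      rw [MeasurableEquiv.symm_symm, MeasurableEquiv.coe_toLp, PiLp.toLp_apply]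
      rw [Bb.repr_apply_apply]
      refine Fin.lastCases ?_ (fun j => ?_) i
      · rw [Fin.insertNth_apply_same, hBblast, inner_add_right, hinneru,
          real_inner_smul_right, real_inner_self_eq_norm_mul_norm, hu]
        ring
      · rw [← Fin.succAbove_last, Fin.insertNth_apply_succAbove, Fin.succAbove_last, hBb0,
          inner_add_right, real_inner_smul_right]
        have h1 : ⟪((b0 j : H) : Ed (m+1)), u⟫ = 0 := by
          have := (b0 j).2
          rw [Submodule.mem_orthogonal] at this
          have h2 := this u (Submodule.mem_span_singleton_self u)
          rwa [real_inner_comm] at h2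
        rw [h1, mul_zero, add_zero, ← Submodule.coe_inner, ← b0.repr_apply_apply,
          hYdef]
        simp only [LinearIsometryEquiv.apply_symm_apply]
        rw [MeasurableEquiv.symm_symm, MeasurableEquiv.coe_toLp, PiLp.toLp_apply]
    have hcoord : ∀ (τ : ℝ) (ω : Fin m → ℝ), ⟪Φ (τ, ω), u⟫ = τ := by
      intro τ ω
      rw [hdecomp, inner_add_left, real_inner_smul_left, real_inner_self_eq_norm_mul_norm, hu]
      have := hinneru (Y ω)
      rw [real_inner_comm] at this
      rw [this]
      ring
    have hYmp : MeasurePreserving Y ν (volume : Measure H) :=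
      b0.measurePreserving_repr_symm.comp
        (EuclideanSpace.volume_preserving_symm_measurableEquiv_toLp (Fin m)).symm
    have hYmeas : Measurable Y := hYmp.measurable
    -- inner bound
    have hinner_bound : ∀ τ : ℝ, ∫⁻ ω, ψ (Φ (τ, ω)) ∂ν
        ≤ (Ioo (-1:ℝ) 1).indicator (fun _ => ENNReal.ofReal ((|s - t|^m)⁻¹) * I) τ := by
      intro τ
      by_cases hτ : τ ∈ Ioo (-1:ℝ) 1 ∧ τ ≠ 0
      · obtain ⟨hτI, hτ0⟩ := hτ
        rw [Set.indicator_of_mem hτI]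
        set c : ℝ := (t - s) * (-τ⁻¹) with hcdef
        have hc0 : c ≠ 0 :=
          mul_ne_zero (sub_ne_zero.mpr (Ne.symm hst)) (neg_ne_zero.mpr (inv_ne_zero hτ0))
        have hpointwise : ∀ ω, ψ (Φ (τ, ω)) ≤ g (c • Y ω) := by
          intro ω
          by_cases hxb : Φ (τ, ω) ∈ ball (0 : Ed (m+1)) 1 \ {0}
          · rw [hψdef, Set.indicator_of_mem hxb]
            simp only [hGdef]
            by_cases hcond : (1:ℝ) / Real.sqrt ((m+1 : ℕ))
                ≤ ‖Φ (τ, ω)‖⁻¹ * |⟪Φ (τ, ω), u⟫|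
            · rw [if_pos hcond]
              apply le_of_eq
              congr 1
              rw [hcoord]
              have hxexp : u - τ⁻¹ • Φ (τ, ω) = ((-τ⁻¹) • Y ω : H) := by
                rw [hdecomp, smul_add, smul_smul, inv_mul_cancel₀ hτ0, one_smul]
                push_cast
                module
              rw [hxexp]
              have hproj := Submodule.orthogonalProjection_mem_subspace_eq_self (K := H)
                ((-τ⁻¹) • Y ω)
              rw [hproj, smul_smul]
            · rw [if_neg hcond]
              exact zero_le
          · rw [hψdef, Set.indicator_of_notMem hxb]
            exact zero_le
        calc ∫⁻ ω, ψ (Φ (τ, ω)) ∂ν ≤ ∫⁻ ω, g (c • Y ω) ∂ν := lintegral_mono hpointwise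
          _ = ∫⁻ y : H, g (c • y) ∂volume :=
              hYmp.lintegral_comp (hgm.comp (measurable_const_smul c))
          _ = ∫⁻ y : H, g y ∂(Measure.map (fun y : H => c • y) volume) :=
              (lintegral_map hgm (measurable_const_smul c)).symm
          _ = ENNReal.ofReal |(c ^ finrank ℝ H)⁻¹| * I := by
              rw [Measure.map_addHaar_smul (volume : Measure H) hc0,
                lintegral_smul_measure, hgint, smul_eq_mul]
          _ ≤ ENNReal.ofReal ((|s - t|^m)⁻¹) * I := by
              apply mul_le_mul_left
              apply ENNReal.ofReal_le_ofReal
              rw [hfr, abs_inv, abs_pow]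
              have hτle : |τ| ≤ 1 := by
                rw [abs_le]
                exact ⟨hτI.1.le, hτI.2.le⟩
              have hcge : |s - t| ≤ |c| := by
                rw [hcdef, abs_mul, abs_neg, abs_inv, abs_sub_comm s t]
                have h1 : (1:ℝ) ≤ |τ|⁻¹ := by
                  rw [le_inv_comm₀]
                  · simpa using hτle
                  · norm_num
                  · exact abs_pos.mpr hτ0
                nlinarith [abs_nonneg (t - s)]
              have hpow : |s - t|^m ≤ |c|^m := pow_le_pow_left₀ (abs_nonneg _) hcge m
              exact inv_anti₀ (by positivity) hpow
      · have hz : ∀ ω, ψ (Φ (τ, ω)) = 0 := by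
          intro ω
          by_cases hxb : Φ (τ, ω) ∈ ball (0 : Ed (m+1)) 1 \ {0}
          · rw [hψdef, Set.indicator_of_mem hxb]
            simp only [hGdef]
            apply if_neg
            intro hcond
            have hx0 : Φ (τ, ω) ≠ 0 := hxb.2
            have hxlt : ‖Φ (τ, ω)‖ < 1 := by
              have := hxb.1
              rwa [mem_ball, dist_zero_right] at this
            rw [hcoord] at hcond
            have habs : |τ| ≤ ‖Φ (τ, ω)‖ := by
              have h1 := abs_real_inner_le_norm (Φ (τ, ω)) u
              rw [hcoord, hu, mul_one] at h1
              exact h1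
            have hτ0 : τ ≠ 0 := by
              intro h0
              rw [h0, abs_zero, mul_zero] at hcond
              linarith
            exact hτ ⟨mem_Ioo.mpr (abs_lt.mp (lt_of_le_of_lt habs hxlt)), hτ0⟩
          · rw [hψdef, Set.indicator_of_notMem hxb]
        calc ∫⁻ ω, ψ (Φ (τ, ω)) ∂ν = 0 := by
              simp only [hz, lintegral_const, zero_mul]
          _ ≤ _ := zero_le
    calc ∫⁻ x in ball (0 : Ed (m+1)) 1 \ {0}, G x ∂volume
        = ∫⁻ x, ψ x ∂volume := (lintegral_indicator hmeasball _).symm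
      _ = ∫⁻ x, ψ (Φ (Ψ x)) ∂volume := by
          congr 1
          funext x
          rw [hΦΨ]
      _ = ∫⁻ z, ψ (Φ z) ∂((volume : Measure ℝ).prod ν) :=
          hΨmp.lintegral_comp (hψmeas.comp hΦmeas)
      _ = ∫⁻ τ, ∫⁻ ω, ψ (Φ (τ, ω)) ∂ν ∂(volume : Measure ℝ) :=
          lintegral_prod _ ((hψmeas.comp hΦmeas).aemeasurable)
      _ ≤ ∫⁻ τ, (Ioo (-1:ℝ) 1).indicator (fun _ => ENNReal.ofReal ((|s - t|^m)⁻¹) * I) τ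
            ∂(volume : Measure ℝ) := lintegral_mono hinner_bound
      _ = (ENNReal.ofReal ((|s - t|^m)⁻¹) * I) * volume (Ioo (-1:ℝ) 1) :=
          lintegral_indicator_const measurableSet_Ioo _
      _ = ENNReal.ofReal ((|s - t|^m)⁻¹) * I * ENNReal.ofReal 2 := by
          rw [Real.volume_Ioo]
          norm_num
  have hmeasg : Measurable fun ξ : sphere (0 : Ed (m+1)) 1 => g ((t - s) • vm ξ) :=
    hgm.comp (hvm.const_smul (t - s))
  calc (∫⁻ ξ in W, (g ((t - s) • vm ξ)) ^ (r/p) ∂(volume : Measure (Ed (m+1))).toSphere) ^ (p/r)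
      ≤ (∫⁻ ξ in W, M ^ (r/p - 1) * g ((t - s) • vm ξ)
          ∂(volume : Measure (Ed (m+1))).toSphere) ^ (p/r) :=
        ENNReal.rpow_le_rpow (lintegral_mono fun ξ => hpow _) he0.le
    _ = (M ^ (r/p - 1) * ∫⁻ ξ in W, g ((t - s) • vm ξ)
          ∂(volume : Measure (Ed (m+1))).toSphere) ^ (p/r) := by
        rw [lintegral_const_mul _ hmeasg]
    _ ≤ (M ^ (r/p - 1) * (((m+1 : ℕ) : ℝ≥0∞) * (ENNReal.ofReal ((|s - t|^m)⁻¹) * I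
          * ENNReal.ofReal 2))) ^ (p/r) :=
        ENNReal.rpow_le_rpow (mul_le_mul_right hsphere_bound _) he0.le
    _ ≤ ENNReal.ofReal (C * |s - t| ^ (-((((m+1:ℕ)):ℝ) - 1) * p / r)) * I ^ ((p + r) / (2 * r)) := by
        have hq0 : (0:ℝ) ≤ r/p - 1 := by linarith
        have hM : M ^ (r/p - 1) = I ^ ((1/2 : ℝ) * (r/p - 1)) := by
          rw [hMdef]; exact (ENNReal.rpow_mul I _ _).symm
        set J := ENNReal.ofReal ((|s - t|^m)⁻¹) with hJdef
        set K : ℝ≥0∞ := ((m+1 : ℕ) : ℝ≥0∞) * ENNReal.ofReal 2 with hKdef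
        have hsplit : M ^ (r/p - 1) * (((m+1 : ℕ) : ℝ≥0∞) * (J * I * ENNReal.ofReal 2))
            = (K * J) * I ^ ((1/2 : ℝ) * (r/p - 1) + 1) := by
          rw [hM, ENNReal.rpow_add _ _ hI0 hItop, ENNReal.rpow_one, hKdef]
          ring
        have hwe : ((1/2 : ℝ) * (r/p - 1) + 1) * (p/r) = (p + r) / (2 * r) := by
          field_simp
          ring
        have hxe : ((|s - t|^m)⁻¹) ^ (p/r) = |s - t| ^ (-((((m+1:ℕ)):ℝ) - 1) * p / r) := by
          rw [← Real.rpow_natCast |s - t| m, ← Real.rpow_neg (abs_nonneg _),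
            ← Real.rpow_mul (abs_nonneg _)]
          congr 1
          push_cast
          ring
        have hK1 : (1:ℝ≥0∞) ≤ K := by
          rw [hKdef]
          calc (1:ℝ≥0∞) = 1 * 1 := (one_mul 1).symm
            _ ≤ ((m+1 : ℕ) : ℝ≥0∞) * ENNReal.ofReal 2 := by
                apply mul_le_mul'
                · exact_mod_cast Nat.one_le_iff_ne_zero.mpr (Nat.succ_ne_zero m)
                · rw [show ((1:ℝ≥0∞)) = ENNReal.ofReal 1 by simp]
                  exact ENNReal.ofReal_le_ofReal (by norm_num)
        have hKC : K = ENNReal.ofReal C := by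
          rw [hKdef, hCdef, ENNReal.ofReal_natCast]
          push_cast
          rw [ENNReal.ofReal_ofNat]
          ring
        calc (M ^ (r/p - 1) * (((m+1 : ℕ) : ℝ≥0∞) * (J * I * ENNReal.ofReal 2))) ^ (p/r)
            = ((K * J) * I ^ ((1/2 : ℝ) * (r/p - 1) + 1)) ^ (p/r) := by rw [hsplit]
          _ = (K * J) ^ (p/r) * (I ^ ((1/2 : ℝ) * (r/p - 1) + 1)) ^ (p/r) :=
              ENNReal.mul_rpow_of_nonneg _ _ he0.le
          _ = K ^ (p/r) * J ^ (p/r) * I ^ ((p + r) / (2 * r)) := by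
              rw [ENNReal.mul_rpow_of_nonneg _ _ he0.le, ← ENNReal.rpow_mul, hwe]
          _ ≤ K * J ^ (p/r) * I ^ ((p + r) / (2 * r)) := by
              apply mul_le_mul_left
              apply mul_le_mul_left
              calc K ^ (p/r) ≤ K ^ (1:ℝ) := ENNReal.rpow_le_rpow_of_exponent_le hK1 he1
                _ = K := ENNReal.rpow_one K
          _ = ENNReal.ofReal (C * |s - t| ^ (-((((m+1:ℕ)):ℝ) - 1) * p / r))
                * I ^ ((p + r) / (2 * r)) := by
              rw [hJdef, ENNReal.ofReal_rpow_of_pos (by positivity), hxe, hKC,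
                ← ENNReal.ofReal_mul hCpos.le]
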